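/- (Observation 1, generalized) Let n ≥ 1, let I be a finite index set, p : I → ℝ with p i ≥ 0 and Σ_i p_i = 1, let μ_i be density matrices on ℂ^{2^n} (indexed by Fin n → Fin 2), and set ρ = Σ_i p_i · (μ_i ⊗ μ_i). Then there exists a real symmetric positive semidefinite matrix Γ indexed by Pauli labels s : Fin n → Fin 4 such that: Γ 0 0 = 1 (where 0 is the all-zero label); Γ s 0 = Γ s s for all s; Γ s t = 0 whenever E_s and E_t anticommute; and (Γ s s : ℂ) = tr((E_s ⊗ E_sᴴ) · ρ) for all s. -/

import Mathlib

open Matrix Kronecker ComplexOrder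

/-- The four Pauli matrices `σ₀, σ₁, σ₂, σ₃`. -/
def pauli : Fin 4 → Matrix (Fin 2) (Fin 2) ℂ :=
  ![!![1, 0; 0, 1], !![0, 1; 1, 0], !![0, -Complex.I; Complex.I, 0], !![1, 0; 0, -1]]

/-- The Pauli string `E_s`, `E_s x y = ∏_k (σ_{s k}) (x k) (y k)`. -/
def pauliString (n : ℕ) (s : Fin n → Fin 4) :
    Matrix (Fin n → Fin 2) (Fin n → Fin 2) ℂ :=
  Matrix.of fun x y => ∏ k, pauli (s k) (x k) (y k)

/-- The weight of a Pauli label: the number of non-identity tensor factors. -/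
def wt {n : ℕ} (s : Fin n → Fin 4) : ℕ :=
  (Finset.univ.filter fun k => s k ≠ 0).card

/-- The swap operator on `ℂ^{2^n} ⊗ ℂ^{2^n}`. -/
def swapN (n : ℕ) :
    Matrix ((Fin n → Fin 2) × (Fin n → Fin 2)) ((Fin n → Fin 2) × (Fin n → Fin 2)) ℂ :=
  Matrix.of fun p q => if p.1 = q.2 ∧ p.2 = q.1 then 1 else 0

/-- Observation 1 (generalized): for a symmetric separable state
`ρ = Σ_i p_i μ_i ⊗ μ_i` there exists a real symmetric PSD moment matrix `Γ` indexed by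
Pauli labels with `Γ 0 0 = 1`, `Γ s 0 = Γ s s`, `Γ s t = 0` for anticommuting pairs, and
diagonal given by the correlations of `ρ`. -/
lemma pauli_sq (j : Fin 4) : pauli j * pauli j = 1 := by
  fin_cases j <;> ext i k <;> fin_cases i <;> fin_cases k <;>
    simp [pauli, Matrix.mul_apply, Fin.sum_univ_two, Matrix.one_apply, Complex.I_mul_I] <;> ring_nf <;>
    simp [Complex.I_sq]

lemma pauli_zero : pauli 0 = 1 := by
  ext i k; fin_cases i <;> fin_cases k <;> simp [pauli, Matrix.one_apply]

lemma pauli_herm (j : Fin 4) : (pauli j)ᴴ = pauli j := by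
  fin_cases j <;> ext i k <;> fin_cases i <;> fin_cases k <;>
    simp [pauli, Matrix.conjTranspose_apply]

lemma prod_one_apply {n : ℕ} (x y : Fin n → Fin 2) :
    (∏ k, (1 : Matrix (Fin 2) (Fin 2) ℂ) (x k) (y k)) = (1 : Matrix (Fin n → Fin 2) (Fin n → Fin 2) ℂ) x y := by
  by_cases h : x = y
  · subst h; simp [Matrix.one_apply]
  · obtain ⟨k, hk⟩ := Function.ne_iff.mp h
    rw [Finset.prod_eq_zero (Finset.mem_univ k) (by simp [Matrix.one_apply, hk]),
      Matrix.one_apply_ne h]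

lemma pauliString_mul {n : ℕ} (s t : Fin n → Fin 4) :
    pauliString n s * pauliString n t =
      Matrix.of fun x y => ∏ k, (pauli (s k) * pauli (t k)) (x k) (y k) := by
  ext x y
  simp only [Matrix.mul_apply, pauliString, Matrix.of_apply]
  rw [Finset.prod_univ_sum, Fintype.piFinset_univ]
  exact Finset.sum_congr rfl fun z _ => (Finset.prod_mul_distrib).symm

lemma pauliString_sq {n : ℕ} (s : Fin n → Fin 4) : pauliString n s * pauliString n s = 1 := by
  rw [pauliString_mul]; ext x y
  simp only [Matrix.of_apply, pauli_sq]
  exact prod_one_apply x y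

lemma pauliString_zero {n : ℕ} : pauliString n 0 = 1 := by
  ext x y
  simp only [pauliString, Matrix.of_apply, Pi.zero_apply, pauli_zero]
  exact prod_one_apply x y

lemma pauliString_herm {n : ℕ} (s : Fin n → Fin 4) : (pauliString n s)ᴴ = pauliString n s := by
  ext x y
  simp only [Matrix.conjTranspose_apply, pauliString, Matrix.of_apply, star_prod]
  exact Finset.prod_congr rfl fun k _ => by
    rw [← Matrix.conjTranspose_apply, pauli_herm]

lemma trace_nonneg_of_psd {m : Type*} [Fintype m] [DecidableEq m] {M : Matrix m m ℂ}
    (hM : M.PosSemidef) : 0 ≤ M.trace := by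
  rw [Matrix.trace]
  refine Finset.sum_nonneg fun i _ => ?_
  have := hM.diag_nonneg (i := i)
  simpa [dotProduct, Matrix.mulVec, Pi.single_apply, Finset.mul_sum,
    Finset.sum_ite_eq, Finset.sum_ite_eq'] using this

theorem stmt11 (n : ℕ) (hn : 1 ≤ n) {I : Type*} [Fintype I]
    (p : I → ℝ) (hp : ∀ i, 0 ≤ p i) (hsum : ∑ i, p i = 1)
    (μ : I → Matrix (Fin n → Fin 2) (Fin n → Fin 2) ℂ)
    (hpsd : ∀ i, (μ i).PosSemidef) (htr : ∀ i, (μ i).trace = 1) :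
    ∃ Γ : Matrix (Fin n → Fin 4) (Fin n → Fin 4) ℝ,
      Γ.IsSymm ∧ Γ.PosSemidef ∧
      Γ 0 0 = 1 ∧
      (∀ s, Γ s 0 = Γ s s) ∧
      (∀ s t, pauliString n s * pauliString n t = -(pauliString n t * pauliString n s) →
        Γ s t = 0) ∧
      (∀ s, (Γ s s : ℂ) =
        ((pauliString n s ⊗ₖ (pauliString n s)ᴴ) * ∑ i, (p i : ℂ) • (μ i ⊗ₖ μ i)).trace) := by
  classical
  set a : I → (Fin n → Fin 4) → ℂ := fun i s => (pauliString n s * μ i).trace with ha_def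
  set c : I → (Fin n → Fin 4) → (Fin n → Fin 4) → ℂ :=
    fun i s t => (pauliString n s * pauliString n t * μ i).trace with hc_def
  set G : (Fin n → Fin 4) → (Fin n → Fin 4) → ℂ :=
    fun s t => ∑ i, (p i : ℂ) * (a i s * a i t * ((c i s t + c i t s) / 2)) with hG_def
  have hμh : ∀ i, (μ i)ᴴ = μ i := fun i => (hpsd i).1
  have ha_star : ∀ i s, (starRingEnd ℂ) (a i s) = a i s := by
    intro i s
    show star ((pauliString n s * μ i).trace) = _
    rw [← Matrix.trace_conjTranspose, Matrix.conjTranspose_mul, hμh, pauliString_herm,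
      Matrix.trace_mul_comm]
  have hc_star : ∀ i s t, (starRingEnd ℂ) (c i s t) = c i t s := by
    intro i s t
    show star ((pauliString n s * pauliString n t * μ i).trace) = _
    rw [← Matrix.trace_conjTranspose, Matrix.conjTranspose_mul, hμh,
      Matrix.conjTranspose_mul, pauliString_herm, pauliString_herm,
      Matrix.trace_mul_comm, Matrix.mul_assoc, ← Matrix.mul_assoc]
  have ha0 : ∀ i, a i 0 = 1 := by
    intro i; show (pauliString n 0 * μ i).trace = 1
    rw [pauliString_zero, one_mul, htr]
  have hc_ss : ∀ i s, c i s s = 1 := by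
    intro i s; show (pauliString n s * pauliString n s * μ i).trace = 1
    rw [pauliString_sq, one_mul, htr]
  have hc_s0 : ∀ i s, c i s 0 = a i s := by
    intro i s; show (pauliString n s * pauliString n 0 * μ i).trace = _
    rw [pauliString_zero, mul_one]
  have hc_0s : ∀ i s, c i 0 s = a i s := by
    intro i s; show (pauliString n 0 * pauliString n s * μ i).trace = _
    rw [pauliString_zero, one_mul]
  have hGsymm : ∀ s t, G s t = G t s := by
    intro s t
    exact Finset.sum_congr rfl fun i _ => by ring
  have hG_star : ∀ s t, (starRingEnd ℂ) (G s t) = G s t := by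
    intro s t
    rw [map_sum]
    refine Finset.sum_congr rfl fun i _ => ?_
    rw [_root_.map_mul, _root_.map_mul, _root_.map_mul, map_div₀, map_add, map_ofNat,
      Complex.conj_ofReal, ha_star, ha_star, hc_star, hc_star]
    ring
  have hreal : ∀ s t, (((G s t).re : ℝ) : ℂ) = G s t := fun s t =>
    Complex.conj_eq_iff_re.mp (hG_star s t)
  have hGss : ∀ s, G s s = ∑ i, (p i : ℂ) * (a i s * a i s) := by
    intro s
    refine Finset.sum_congr rfl fun i _ => ?_
    rw [hc_ss]; ring
  have hGs0 : ∀ s, G s 0 = ∑ i, (p i : ℂ) * (a i s * a i s) := by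
    intro s
    refine Finset.sum_congr rfl fun i _ => ?_
    rw [hc_s0, hc_0s, ha0]; ring
  have hG00 : G 0 0 = 1 := by
    rw [hGss]
    have : ∀ i ∈ Finset.univ, (p i : ℂ) * (a i 0 * a i 0) = (p i : ℂ) := by
      intro i _; rw [ha0]; ring
    rw [Finset.sum_congr rfl this, ← Complex.ofReal_sum, hsum, Complex.ofReal_one]
  refine ⟨Matrix.of fun s t => (G s t).re, ?_, ?_, ?_, ?_, ?_, ?_⟩
  · ext s t
    simp only [Matrix.transpose_apply, Matrix.of_apply, hGsymm s t]
  · refine Matrix.PosSemidef.of_dotProduct_mulVec_nonneg ?_ ?_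
    · ext s t
      simp only [Matrix.conjTranspose_apply, Matrix.of_apply, star_trivial, hGsymm s t]
    · intro x
      set A : I → Matrix (Fin n → Fin 2) (Fin n → Fin 2) ℂ :=
        fun i => ∑ s, ((x s : ℂ) * a i s) • pauliString n s with hA_def
      have hAh : ∀ i, (A i)ᴴ = A i := by
        intro i
        rw [Matrix.conjTranspose_sum]
        refine Finset.sum_congr rfl fun s _ => ?_
        rw [Matrix.conjTranspose_smul, pauliString_herm]
        congr 1
        simp only [star_mul', Complex.star_def, Complex.conj_ofReal, ha_star]
      have key : ∀ i, ((A i) * (A i) * μ i).trace =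
          ∑ s, ∑ t, ((x s : ℂ) * (x t : ℂ)) * (a i s * a i t * c i s t) := by
        intro i
        rw [hA_def]
        rw [Finset.sum_mul_sum]
        rw [Finset.sum_mul, Matrix.trace_sum]
        refine Finset.sum_congr rfl fun s _ => ?_
        rw [Finset.sum_mul, Matrix.trace_sum]
        refine Finset.sum_congr rfl fun t _ => ?_
        rw [smul_mul_smul_comm, Matrix.smul_mul, Matrix.trace_smul, smul_eq_mul]
        show _ * (pauliString n s * pauliString n t * μ i).trace = _
        ring
      have hQpos : 0 ≤ ∑ i, (p i : ℂ) * ((A i) * (A i) * μ i).trace := by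
        refine Finset.sum_nonneg fun i _ => mul_nonneg ?_ ?_
        · rw [Complex.zero_le_real]; exact hp i
        · have h1 : ((A i)ᴴ * μ i * A i).PosSemidef :=
            (hpsd i).conjTranspose_mul_mul_same (A i)
          rw [hAh] at h1
          have h2 := trace_nonneg_of_psd h1
          rwa [Matrix.trace_mul_cycle] at h2
      have hQ2 : (∑ s, ∑ t, ((x s : ℂ) * (x t : ℂ)) * G s t) =
          ∑ i, (p i : ℂ) * ((A i) * (A i) * μ i).trace := by
        calc (∑ s, ∑ t, ((x s : ℂ) * (x t : ℂ)) * G s t)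
            = ∑ s, ∑ t, ∑ i, (p i : ℂ) *
                (((x s : ℂ) * (x t : ℂ)) * (a i s * a i t * ((c i s t + c i t s) / 2))) := by
              refine Finset.sum_congr rfl fun s _ => Finset.sum_congr rfl fun t _ => ?_
              rw [hG_def, Finset.mul_sum]
              exact Finset.sum_congr rfl fun i _ => by ring
          _ = ∑ s, ∑ i, ∑ t, (p i : ℂ) *
                (((x s : ℂ) * (x t : ℂ)) * (a i s * a i t * ((c i s t + c i t s) / 2))) :=
              Finset.sum_congr rfl fun s _ => Finset.sum_comm
          _ = ∑ i, ∑ s, ∑ t, (p i : ℂ) *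
                (((x s : ℂ) * (x t : ℂ)) * (a i s * a i t * ((c i s t + c i t s) / 2))) :=
              Finset.sum_comm
          _ = ∑ i, (p i : ℂ) * ∑ s, ∑ t,
                (((x s : ℂ) * (x t : ℂ)) * (a i s * a i t * ((c i s t + c i t s) / 2))) := by
              refine Finset.sum_congr rfl fun i _ => ?_
              rw [Finset.mul_sum]
              exact Finset.sum_congr rfl fun s _ => (Finset.mul_sum _ _ _).symm
          _ = ∑ i, (p i : ℂ) * ((A i) * (A i) * μ i).trace := by
              refine Finset.sum_congr rfl fun i _ => ?_
              rw [key i]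
              congr 1
              have hsw : (∑ s, ∑ t, ((x s : ℂ) * (x t : ℂ)) * (a i s * a i t * c i t s)) =
                  ∑ s, ∑ t, ((x s : ℂ) * (x t : ℂ)) * (a i s * a i t * c i s t) := by
                rw [Finset.sum_comm]
                exact Finset.sum_congr rfl fun s _ => Finset.sum_congr rfl fun t _ => by ring
              have step1 : (∑ s, ∑ t, ((x s : ℂ) * (x t : ℂ)) *
                    (a i s * a i t * ((c i s t + c i t s) / 2)))
                  = ((∑ s, ∑ t, ((x s : ℂ) * (x t : ℂ)) * (a i s * a i t * c i s t)) +
                     (∑ s, ∑ t, ((x s : ℂ) * (x t : ℂ)) * (a i s * a i t * c i t s))) / 2 := by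
                rw [← Finset.sum_add_distrib, Finset.sum_div]
                refine Finset.sum_congr rfl fun s _ => ?_
                rw [← Finset.sum_add_distrib, Finset.sum_div]
                exact Finset.sum_congr rfl fun t _ => by ring
              rw [step1, hsw]
              ring
      have hQre : 0 ≤ (∑ s, ∑ t, ((x s : ℂ) * (x t : ℂ)) * G s t).re := by
        rw [hQ2]
        exact (Complex.le_def.mp hQpos).1
      have hform : star x ⬝ᵥ (Matrix.of fun s t => (G s t).re) *ᵥ x =
          (∑ s, ∑ t, ((x s : ℂ) * (x t : ℂ)) * G s t).re := by
        rw [Complex.re_sum]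
        simp only [dotProduct, Matrix.mulVec, Matrix.of_apply, star_trivial]
        refine Finset.sum_congr rfl fun s _ => ?_
        rw [Complex.re_sum, Finset.mul_sum]
        refine Finset.sum_congr rfl fun t _ => ?_
        rw [show ((x s : ℂ) * (x t : ℂ)) * G s t = ((x s * x t : ℝ) : ℂ) * G s t by push_cast; ring,
          Complex.re_ofReal_mul]
        ring
      rw [hform]
      exact hQre
  · simp only [Matrix.of_apply, hG00, Complex.one_re]
  · intro s
    simp only [Matrix.of_apply, hGs0 s, hGss s]
  · intro s t h
    have hc' : ∀ i, c i s t = - c i t s := by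
      intro i
      show (pauliString n s * pauliString n t * μ i).trace = _
      rw [h, Matrix.neg_mul, Matrix.trace_neg]
    have : G s t = 0 := by
      rw [hG_def]
      refine Finset.sum_eq_zero fun i _ => ?_
      rw [hc' i]; ring
    simp only [Matrix.of_apply, this, Complex.zero_re]
  · intro s
    rw [Matrix.of_apply, hreal s s, hGss s, Matrix.mul_sum, Matrix.trace_sum]
    refine Finset.sum_congr rfl fun i _ => ?_
    rw [Matrix.mul_smul, Matrix.trace_smul, pauliString_herm, ← Matrix.mul_kronecker_mul,
      Matrix.trace_kronecker, smul_eq_mul]
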